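/- (Online gradient descent regret, Zinkevich) Let F ⊆ ℝ^n be nonempty, closed, convex with diam_2(F) ≤ D, let g_1, …, g_T ∈ ℝ^n with ‖g_t‖_2 ≤ G for all t, and define x_1 ∈ F arbitrary and x_{t+1} = P_F(x_t − η·g_t) with constant step size η = D/(G√T), where P_F is the Euclidean projection onto F. Then for every x* ∈ F, Σ_{t=1}^T ⟨g_t, x_t − x*⟩ ≤ D·G·√T. -/

import Mathlib

set_option maxHeartbeats 1000000


open Finset Real

lemma proj_nonexpansive_aux {n : ℕ} (F : Set (EuclideanSpace ℝ (Fin n)))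
    (hFconv : Convex ℝ F)
    (P : EuclideanSpace ℝ (Fin n) → EuclideanSpace ℝ (Fin n))
    (hP : ∀ y, P y ∈ F ∧ ∀ z ∈ F, ‖y - P y‖ ≤ ‖y - z‖)
    (y z : EuclideanSpace ℝ (Fin n)) (hz : z ∈ F) : ‖P y - z‖ ≤ ‖y - z‖ := by
  have hne : F.Nonempty := ⟨P y, (hP y).1⟩
  haveI : Nonempty ↑F := hne.to_subtype
  have hbdd : BddBelow (Set.range fun w : F => ‖y - (w : EuclideanSpace ℝ (Fin n))‖) :=
    ⟨0, fun b hb => by obtain ⟨w, rfl⟩ := hb; exact norm_nonneg _⟩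
  have hinf : ‖y - P y‖ = ⨅ w : F, ‖y - w‖ := by
    refine le_antisymm (le_ciInf fun w => (hP y).2 w w.2) ?_
    exact ciInf_le hbdd ⟨P y, (hP y).1⟩
  have hvar := (norm_eq_iInf_iff_real_inner_le_zero hFconv (hP y).1).mp hinf
  have h1 : (inner ℝ (y - P y) (z - P y) : ℝ) ≤ 0 := hvar z hz
  have hdecomp : y - z = (y - P y) + (P y - z) := by abel
  have hsq : ‖y - z‖ ^ 2 = ‖y - P y‖ ^ 2 + 2 * (inner ℝ (y - P y) (P y - z) : ℝ)
      + ‖P y - z‖ ^ 2 := by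
    rw [hdecomp]; exact norm_add_sq_real _ _
  have h2 : (inner ℝ (y - P y) (P y - z) : ℝ) = -(inner ℝ (y - P y) (z - P y) : ℝ) := by
    rw [← inner_neg_right]; congr 1; abel
  have hle : ‖P y - z‖ ^ 2 ≤ ‖y - z‖ ^ 2 := by
    nlinarith [sq_nonneg ‖y - P y‖]
  have := Real.sqrt_le_sqrt hle
  rwa [Real.sqrt_sq (norm_nonneg _), Real.sqrt_sq (norm_nonneg _)] at this

theorem stmt_10 (n T : ℕ) (hT : 1 ≤ T) (D G : ℝ) (hD : 0 < D) (hG : 0 < G)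
    (F : Set (EuclideanSpace ℝ (Fin n))) (hFne : F.Nonempty)
    (hFclosed : IsClosed F) (hFconv : Convex ℝ F)
    (hFdiam : ∀ a ∈ F, ∀ b ∈ F, ‖a - b‖ ≤ D)
    (g : Fin T → EuclideanSpace ℝ (Fin n)) (hg : ∀ t, ‖g t‖ ≤ G)
    (P : EuclideanSpace ℝ (Fin n) → EuclideanSpace ℝ (Fin n))
    (hP : ∀ y, P y ∈ F ∧ ∀ z ∈ F, ‖y - P y‖ ≤ ‖y - z‖)
    (η : ℝ) (hη : η = D / (G * Real.sqrt T))
    (x : ℕ → EuclideanSpace ℝ (Fin n)) (hx0 : x 0 ∈ F)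
    (hstep : ∀ t : Fin T, x (t + 1) = P (x t - η • g t)) :
    ∀ xstar ∈ F,
      ∑ t : Fin T, (inner ℝ (g t) (x t - xstar) : ℝ) ≤ D * G * Real.sqrt T := by
  intro xstar hxstar
  set s := Real.sqrt T with hs
  have hs0 : 0 < s := Real.sqrt_pos.mpr (by exact_mod_cast Nat.pos_of_ne_zero (by omega))
  have hs2 : s ^ 2 = T := Real.sq_sqrt (by positivity)
  have hη0 : 0 < η := by rw [hη]; positivity
  set a : ℕ → ℝ := fun k => ‖x k - xstar‖ ^ 2 with ha
  -- per-step inequality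
  have hstep2 : ∀ t : Fin T,
      (inner ℝ (g t) (x t - xstar) : ℝ) ≤ (a t - a (t + 1)) / (2 * η) + η * G ^ 2 / 2 := by
    intro t
    have hnx : ‖x (t + 1) - xstar‖ ≤ ‖(x t - η • g t) - xstar‖ := by
      rw [hstep t]
      exact proj_nonexpansive_aux F hFconv P hP _ _ hxstar
    have hsq : a (t + 1) ≤ ‖(x t - xstar) - η • g t‖ ^ 2 := by
      have : (x t - η • g t) - xstar = (x t - xstar) - η • g t := by abel
      rw [this] at hnx
      have := pow_le_pow_left₀ (norm_nonneg _) hnx 2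
      simpa [ha] using this
    have hexp : ‖(x t - xstar) - η • g t‖ ^ 2
        = a t - 2 * η * (inner ℝ (x t - xstar) (g t) : ℝ) + η ^ 2 * ‖g t‖ ^ 2 := by
      rw [norm_sub_sq_real, real_inner_smul_right, norm_smul]
      simp [ha, mul_pow, abs_of_pos hη0]
      ring
    have hcomm : (inner ℝ (g t) (x t - xstar) : ℝ) = (inner ℝ (x t - xstar) (g t) : ℝ) :=
      real_inner_comm _ _
    have hgle : ‖g t‖ ^ 2 ≤ G ^ 2 := pow_le_pow_left₀ (norm_nonneg _) (hg t) 2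
    rw [hcomm]
    rw [hexp] at hsq
    rw [div_add_div _ _ (by positivity : (2*η) ≠ 0) (two_ne_zero), le_div_iff₀ (by positivity)]
    nlinarith [sq_nonneg η]
  calc ∑ t : Fin T, (inner ℝ (g t) (x t - xstar) : ℝ)
      ≤ ∑ t : Fin T, ((a t - a (t + 1)) / (2 * η) + η * G ^ 2 / 2) :=
        Finset.sum_le_sum fun t _ => hstep2 t
    _ = (a 0 - a T) / (2 * η) + T * (η * G ^ 2 / 2) := by
        rw [Finset.sum_add_distrib, ← Finset.sum_div]
        have : ∑ t : Fin T, (a t - a (t + 1)) = a 0 - a T := by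
          rw [Fin.sum_univ_eq_sum_range (fun i => a i - a (i + 1))]
          exact Finset.sum_range_sub' a T
        rw [this]
        simp [mul_comm]
    _ ≤ D ^ 2 / (2 * η) + T * (η * G ^ 2 / 2) := by
        have h0 : a 0 ≤ D ^ 2 :=
          pow_le_pow_left₀ (norm_nonneg _) (hFdiam _ hx0 _ hxstar) 2
        have hT0 : 0 ≤ a T := sq_nonneg _
        gcongr
        linarith
    _ = D * G * s := by
        rw [hη, ← hs2]
        have hG' : G ≠ 0 := ne_of_gt hG
        have hs' : s ≠ 0 := ne_of_gt hs0
        field_simp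
        ring
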